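/- Let D be an integral domain with quotient field K, T an overring of D, ⋆ a semistar operation on D, and ⋆' a semistar operation on T which is a (semi)star operation, i.e. T^{⋆'} = T. If T is (⋆,⋆')-linked to D, then T^{ℓ_{⋆,T}} = T. -/

import Mathlib

open Pointwise

/-! Basic framework for semistar operations on an integral domain `D`
with quotient field `K`. Submodules of `K` play the role of the
`D`-submodules of the quotient field. -/

section Generic

variable (R : Type*) (K : Type*) [CommRing R] [Field K] [Algebra R K]

/-- A semistar operation on `R` (with ambient field `K`): a map on the nonzero
`R`-submodules of `K` satisfying (⋆₁), (⋆₂), (⋆₃). The map is total on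
`Submodule R K`, but the axioms are only imposed on nonzero submodules. -/
structure SemistarOp where
  toFun : Submodule R K → Submodule R K
  smul' : ∀ x : K, x ≠ 0 → ∀ E : Submodule R K, E ≠ ⊥ → toFun (x • E) = x • toFun E
  mono' : ∀ E F : Submodule R K, E ≠ ⊥ → F ≠ ⊥ → E ≤ F → toFun E ≤ toFun F
  le_star' : ∀ E : Submodule R K, E ≠ ⊥ → E ≤ toFun E
  idem' : ∀ E : Submodule R K, E ≠ ⊥ → toFun (toFun E) = toFun E

variable {R K}

/-- The `R`-submodule of `K` generated by (the image of) an ideal of `R`. -/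
def idealSub (I : Ideal R) : Submodule R K := Submodule.map (Algebra.linearMap R K) I

/-- The finite-type operation `⋆_f` associated to (the function underlying) a semistar
operation: `E^{⋆_f} = ∪ { F^⋆ : F nonzero finitely generated, F ⊆ E }`. -/
def starF (f : Submodule R K → Submodule R K) (E : Submodule R K) : Submodule R K :=
  sSup {G | ∃ F : Submodule R K, F.FG ∧ F ≠ ⊥ ∧ F ≤ E ∧ G = f F}

/-- `I` is a quasi-⋆-ideal: `I ≠ 0` and `I^⋆ ∩ R = I`. -/
def QuasiIdeal (f : Submodule R K → Submodule R K) (I : Ideal R) : Prop :=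
  I ≠ ⊥ ∧ Submodule.comap (Algebra.linearMap R K) (f (idealSub I)) = I

/-- `I` is a quasi-⋆-prime: a prime quasi-⋆-ideal. -/
def QuasiPrime (f : Submodule R K → Submodule R K) (I : Ideal R) : Prop :=
  QuasiIdeal f I ∧ I.IsPrime

/-- `I` is a quasi-⋆-maximal: maximal among proper quasi-⋆-ideals. -/
def QuasiMax (f : Submodule R K → Submodule R K) (I : Ideal R) : Prop :=
  QuasiIdeal f I ∧ I ≠ ⊤ ∧ ∀ J : Ideal R, QuasiIdeal f J → J ≠ ⊤ → I ≤ J → I = J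

/-- The localization `E·R_Q` of a submodule `E` of `K` at (the complement of) `Q`:
for prime `Q` this is `{x ∈ K : s·x ∈ E for some s ∉ Q}`. -/
def locSub (Q : Ideal R) (E : Submodule R K) : Submodule R K :=
  Submodule.span R {x : K | ∃ s : R, s ∉ Q ∧ algebraMap R K s * x ∈ E}

/-- The spectral semistar operation `⋆̃` associated to `⋆`:
`E^{⋆̃} = ∩ { E R_Q : Q quasi-⋆_f-maximal }` (equal to `K` if there are none). -/
def tildeOp (f : Submodule R K → Submodule R K) (E : Submodule R K) : Submodule R K :=
  ⨅ (Q : Ideal R) (_ : QuasiMax (starF f) Q), locSub Q E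

/-- The `v`-operation `E ↦ (R :_K (R :_K E))`. -/
def vOp (E : Submodule R K) : Submodule R K := 1 / (1 / E)

/-- The `t`-operation: the finite-type operation associated to `v`. -/
def tOp : Submodule R K → Submodule R K := starF (vOp (R := R) (K := K))

/-- `R` is a Prüfer ⋆-multiplication domain: every nonzero finitely generated ideal `F`
is ⋆_f-invertible, i.e. `(F·(R :_K F))^{⋆_f} = R^⋆`. -/
def PSMD (f : Submodule R K → Submodule R K) : Prop :=
  ∀ F : Ideal R, F ≠ ⊥ → F.FG →
    starF f (idealSub F * ((1 : Submodule R K) / idealSub F)) = f 1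

/-- The content ideal of a polynomial: the ideal generated by its coefficients. -/
def contentI (h : Polynomial R) : Ideal R := Ideal.span (Set.range h.coeff)

/-- The Nagata ring `Na(R,⋆) = R[X]_{N(⋆)}`, realized as the subset
`{g/h : g, h ∈ R[X], h ≠ 0, c(h)^⋆ = R^⋆}` of the field `K(X)` of rational functions. -/
def NaSet (f : Submodule R K → Submodule R K) : Set (RatFunc K) :=
  {x | ∃ g h : Polynomial R, h ≠ 0 ∧ f (idealSub (contentI h)) = f 1 ∧
    x * algebraMap (Polynomial K) (RatFunc K) (h.map (algebraMap R K)) =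
      algebraMap (Polynomial K) (RatFunc K) (g.map (algebraMap R K))}

/-- The Nagata ring as a subring of `K(X)` (the set `NaSet` is multiplicatively
saturated, so it coincides with the subring it generates). -/
noncomputable def NaSub (f : Submodule R K → Submodule R K) : Subring (RatFunc K) :=
  Subring.closure (NaSet f)

/-- A subset `S` of `K` is integrally closed (in `K`) if every element of `K` which is a root
of a monic polynomial with coefficients in `S` lies in `S`. -/
def IntClosedSet (S : Set K) : Prop :=
  ∀ x : K, (∃ p : Polynomial K, p.Monic ∧ (∀ n, p.coeff n ∈ S) ∧ p.eval x = 0) → x ∈ S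

/-- A subset `S` of `K` is seminormal if `x² ∈ S` and `x³ ∈ S` imply `x ∈ S`. -/
def SeminormalSet (S : Set K) : Prop := ∀ x : K, x ^ 2 ∈ S → x ^ 3 ∈ S → x ∈ S

/-- `T` is `(f,g)`-linked to `T` (case `D = T` of linkedness). -/
def LinkedSelf (f g : Submodule R K → Submodule R K) : Prop :=
  ∀ G : Ideal R, G ≠ ⊥ → G.FG → f (idealSub G) = f 1 → g (idealSub G) = g 1

end Generic

section Overring

variable {D : Type*} {K : Type*} [CommRing D] [Field K] [Algebra D K]

/-- The `T`-submodule `E·T` of `K` generated by a `D`-submodule `E` of `K`. -/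
def extT (T : Subalgebra D K) (E : Submodule D K) : Submodule ↥T K :=
  Submodule.span ↥T (E : Set K)

/-- `T` is `(⋆,⋆')`-linked to `D`: for every nonzero finitely generated integral ideal `F`
of `D`, `F^⋆ = D^⋆` implies `(FT)^{⋆'} = T^{⋆'}`. -/
def LinkedF (f : Submodule D K → Submodule D K) (T : Subalgebra D K)
    (g : Submodule ↥T K → Submodule ↥T K) : Prop :=
  ∀ F : Ideal D, F ≠ ⊥ → F.FG → f (idealSub F) = f 1 → g (extT T (idealSub F)) = g 1

/-- `T` is `t`-linked to `(D,⋆)`: `T` is `(⋆, t_T)`-linked to `D`. -/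
def TLinked (f : Submodule D K → Submodule D K) (T : Subalgebra D K) : Prop :=
  LinkedF f T (tOp (R := ↥T) (K := K))

/-- The semistar operation `ℓ_{⋆,T}` on `T`:
`E^ℓ = ∩ { E T_{D∖P} : P quasi-⋆_f-prime of D }` (equal to `K` if there are none). -/
def ellOp (f : Submodule D K → Submodule D K) (T : Subalgebra D K)
    (E : Submodule ↥T K) : Submodule ↥T K :=
  ⨅ (P : Ideal D) (_ : QuasiPrime (starF f) P),
    Submodule.span ↥T {x : K | ∃ r : D, r ∉ P ∧ algebraMap D K r * x ∈ E}

/-- The localization `D_P` of `D` at a prime `P`, as a subalgebra of `K`. -/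
def Dloc (P : Ideal D) : Subalgebra D K :=
  Algebra.adjoin D {x : K | ∃ r : D, r ∉ P ∧ algebraMap D K r * x ∈ (⊥ : Subalgebra D K)}

/-- The localization `T_{D∖P}` of an overring `T` at the multiplicative set `D∖P`,
as a subalgebra of `K`. -/
def TlocD (T : Subalgebra D K) (P : Ideal D) : Subalgebra D K :=
  Algebra.adjoin D {x : K | ∃ r : D, r ∉ P ∧ algebraMap D K r * x ∈ T}

/-- The localization `T_Q` of an overring `T` at a prime `Q` of `T`,
as a subalgebra of `K`. -/
def TlocQ (T : Subalgebra D K) (Q : Ideal ↥T) : Subalgebra D K :=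
  Algebra.adjoin D {x : K | ∃ t : ↥T, t ∉ Q ∧ (t : K) * x ∈ T}

/-- `T` is `(⋆,⋆')`-flat over `D`: `T` is `(⋆,⋆')`-linked to `D` and `D_{Q∩D} = T_Q`
for every quasi-⋆'_f-prime `Q` of `T`. -/
def FlatF (f : Submodule D K → Submodule D K) (T : Subalgebra D K)
    (g : Submodule ↥T K → Submodule ↥T K) : Prop :=
  LinkedF f T g ∧
    ∀ Q : Ideal ↥T, QuasiPrime (starF g) Q →
      Dloc (Q.comap (algebraMap D ↥T)) = TlocQ T Q

/-- `B` is a flat `A`-module (for subalgebras `A ⊆ B` of `K`, with the module structure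
coming from the inclusion). -/
def FlatPair (A B : Subalgebra D K) : Prop :=
  ∃ h : A ≤ B, @Module.Flat ↥A ↥B _ _ ((Subalgebra.inclusion h).toRingHom.toModule)

/-- `B` is a flat `A`-module, for subrings `A ⊆ B` of a commutative ring. -/
def FlatSubring {L : Type*} [CommRing L] (A B : Subring L) : Prop :=
  ∃ h : A ≤ B, @Module.Flat ↥A ↥B _ _ ((Subring.inclusion h).toModule)

end Overring

section AuxLemmas

open Submodule

set_option linter.unusedSectionVars false

variable {D K : Type*} [CommRing D] [IsDomain D] [Field K] [Algebra D K] [IsFractionRing D K]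

namespace SemistarAux

lemma smul_ne_bot {R : Type*} [CommRing R] [Algebra R K] {x : K} (hx : x ≠ 0)
    {E : Submodule R K} (hE : E ≠ ⊥) : x • E ≠ ⊥ := by
  obtain ⟨y, hy, hy0⟩ := Submodule.ne_bot_iff E |>.mp hE
  intro h
  have : x • y ∈ x • E := Submodule.smul_mem_pointwise_smul y x E hy
  rw [h, Submodule.mem_bot] at this
  exact hy0 (by simpa [smul_eq_mul, hx] using this)

variable (s : SemistarOp D K)

lemma starF_mono {f : Submodule D K → Submodule D K} {E E' : Submodule D K} (h : E ≤ E') :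
    starF f E ≤ starF f E' := by
  apply sSup_le_sSup
  rintro G ⟨F, h1, h2, h3, rfl⟩
  exact ⟨F, h1, h2, h3.trans h, rfl⟩

lemma le_starF {E : Submodule D K} (hE : E ≠ ⊥) : E ≤ starF s.toFun E := by
  intro y hy
  by_cases hy0 : y = 0
  · simp [hy0]
  have hspan : (Submodule.span D {y} : Submodule D K) ≠ ⊥ := by
    simp [Submodule.span_singleton_eq_bot, hy0]
  have hmem : y ∈ s.toFun (Submodule.span D {y}) :=
    s.le_star' _ hspan (Submodule.mem_span_singleton_self y)
  have hle : s.toFun (Submodule.span D {y}) ≤ starF s.toFun E :=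
    le_sSup ⟨Submodule.span D {y}, Submodule.fg_span_singleton y, hspan,
      Submodule.span_le.mpr (Set.singleton_subset_iff.mpr hy), rfl⟩
  exact hle hmem

lemma starF_ne_bot {E : Submodule D K} (hE : E ≠ ⊥) : starF s.toFun E ≠ ⊥ :=
  fun h => hE (le_bot_iff.mp (h ▸ le_starF s hE))

lemma mem_starF_iff {E : Submodule D K} (hE : E ≠ ⊥) {x : K} :
    x ∈ starF s.toFun E ↔
      ∃ F : Submodule D K, F.FG ∧ F ≠ ⊥ ∧ F ≤ E ∧ x ∈ s.toFun F := by
  obtain ⟨a, ha, ha0⟩ := Submodule.ne_bot_iff E |>.mp hE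
  have hspan : (Submodule.span D {a} : Submodule D K) ≠ ⊥ := by
    simp [Submodule.span_singleton_eq_bot, ha0]
  have hne : {G | ∃ F : Submodule D K, F.FG ∧ F ≠ ⊥ ∧ F ≤ E ∧ G = s.toFun F}.Nonempty :=
    ⟨s.toFun (Submodule.span D {a}), Submodule.span D {a}, Submodule.fg_span_singleton a, hspan,
      Submodule.span_le.mpr (Set.singleton_subset_iff.mpr ha), rfl⟩
  have hdir : DirectedOn (· ≤ ·)
      {G | ∃ F : Submodule D K, F.FG ∧ F ≠ ⊥ ∧ F ≤ E ∧ G = s.toFun F} := by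
    rintro _ ⟨F₁, hF₁fg, hF₁0, hF₁le, rfl⟩ _ ⟨F₂, hF₂fg, hF₂0, hF₂le, rfl⟩
    have hsup : F₁ ⊔ F₂ ≠ ⊥ := fun h => hF₁0 (le_bot_iff.mp (h ▸ le_sup_left))
    exact ⟨s.toFun (F₁ ⊔ F₂),
      ⟨F₁ ⊔ F₂, hF₁fg.sup hF₂fg, hsup, sup_le hF₁le hF₂le, rfl⟩,
      s.mono' _ _ hF₁0 hsup le_sup_left, s.mono' _ _ hF₂0 hsup le_sup_right⟩
  rw [starF, Submodule.mem_sSup_of_directed hne hdir]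
  constructor
  · rintro ⟨G, ⟨F, h1, h2, h3, rfl⟩, hx⟩
    exact ⟨F, h1, h2, h3, hx⟩
  · rintro ⟨F, h1, h2, h3, hx⟩
    exact ⟨s.toFun F, ⟨F, h1, h2, h3, rfl⟩, hx⟩

lemma star_le_starF {E F : Submodule D K} (hF : F.FG) (hF0 : F ≠ ⊥) (hFE : F ≤ E) :
    s.toFun F ≤ starF s.toFun E :=
  le_sSup ⟨F, hF, hF0, hFE, rfl⟩

lemma starF_idem_le {E : Submodule D K} (hE : E ≠ ⊥) :
    starF s.toFun (starF s.toFun E) ≤ starF s.toFun E := by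
  intro x hx
  rw [mem_starF_iff s (starF_ne_bot s hE)] at hx
  obtain ⟨F, hFfg, hF0, hFle, hxF⟩ := hx
  obtain ⟨t, rfl⟩ := hFfg
  have H : ∀ y ∈ t, ∃ Fy : Submodule D K, Fy.FG ∧ Fy ≠ ⊥ ∧ Fy ≤ E ∧ y ∈ s.toFun Fy := by
    intro y hy
    exact (mem_starF_iff s hE).mp (hFle (Submodule.subset_span hy))
  choose! Fy h1 h2 h3 h4 using H
  have ht : t.Nonempty := by
    rcases t.eq_empty_or_nonempty with h | h
    · exact absurd (by simp [h]) hF0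
    · exact h
  obtain ⟨y₀, hy₀⟩ := ht
  set F' : Submodule D K := t.sup Fy with hF'
  have hF'fg : F'.FG := Submodule.fg_finset_sup t Fy (fun y hy => h1 y hy)
  have hF'0 : F' ≠ ⊥ := fun h => h2 y₀ hy₀ (le_bot_iff.mp (h ▸ Finset.le_sup hy₀))
  have hF'le : F' ≤ E := Finset.sup_le (fun y hy => h3 y hy)
  have hFle' : Submodule.span D (t : Set K) ≤ s.toFun F' := by
    rw [Submodule.span_le]
    intro y hy
    exact s.mono' _ _ (h2 y hy) hF'0 (Finset.le_sup hy) (h4 y hy)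
  have hsF'0 : s.toFun F' ≠ ⊥ :=
    fun h => hF'0 (le_bot_iff.mp (h ▸ s.le_star' F' hF'0))
  have : x ∈ s.toFun F' := by
    have := s.mono' _ _ hF0 hsF'0 hFle' hxF
    rwa [s.idem' F' hF'0] at this
  exact star_le_starF s hF'fg hF'0 hF'le this

lemma star_mul_le {F₁ F₂ : Submodule D K} (h₁ : F₁ ≠ ⊥) (h₂ : F₂ ≠ ⊥) :
    s.toFun F₁ * s.toFun F₂ ≤ s.toFun (F₁ * F₂) := by
  have h₁₂ : F₁ * F₂ ≠ ⊥ := by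
    obtain ⟨a, ha, ha0⟩ := Submodule.ne_bot_iff F₁ |>.mp h₁
    obtain ⟨b, hb, hb0⟩ := Submodule.ne_bot_iff F₂ |>.mp h₂
    exact Submodule.ne_bot_iff _ |>.mpr ⟨a * b, Submodule.mul_mem_mul ha hb, mul_ne_zero ha0 hb0⟩
  have step1 : ∀ a ∈ F₁, ∀ y ∈ s.toFun F₂, a * y ∈ s.toFun (F₁ * F₂) := by
    intro a ha y hy
    by_cases ha0 : a = 0
    · simp [ha0]
    have haF₂ : a • F₂ ≤ F₁ * F₂ := by
      intro z hz
      obtain ⟨w, hw, rfl⟩ := Set.mem_smul_set.mp hz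
      simpa [smul_eq_mul] using Submodule.mul_mem_mul ha hw
    have : a * y ∈ a • s.toFun F₂ := by
      have := Submodule.smul_mem_pointwise_smul y a (s.toFun F₂) hy
      simpa [smul_eq_mul] using this
    rw [← s.smul' a ha0 F₂ h₂] at this
    exact s.mono' _ _ (smul_ne_bot ha0 h₂) h₁₂ haF₂ this
  rw [Submodule.mul_le]
  intro m hm n hn
  by_cases hn0 : n = 0
  · simp [hn0]
  have hnF₁ : n • F₁ ≤ s.toFun (F₁ * F₂) := by
    intro z hz
    obtain ⟨w, hw, rfl⟩ := Set.mem_smul_set.mp hz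
    simpa [smul_eq_mul, mul_comm] using step1 w hw n hn
  have hsbot : s.toFun (F₁ * F₂) ≠ ⊥ :=
    fun h => h₁₂ (le_bot_iff.mp (h ▸ s.le_star' _ h₁₂))
  have hle : s.toFun (n • F₁) ≤ s.toFun (F₁ * F₂) := by
    have := s.mono' _ _ (smul_ne_bot hn0 h₁) hsbot hnF₁
    rw [s.idem' _ h₁₂] at this
    exact this
  have hmem : m * n ∈ s.toFun (n • F₁) := by
    rw [s.smul' n hn0 F₁ h₁]
    have := Submodule.smul_mem_pointwise_smul m n (s.toFun F₁) hm
    simpa [smul_eq_mul, mul_comm] using this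
  exact hle hmem

/-- The closure operation on ideals induced by `⋆_f`. -/
noncomputable def cOp (J : Ideal D) : Ideal D :=
  Submodule.comap (Algebra.linearMap D K) (starF s.toFun (idealSub J))

lemma idealSub_ne_bot {J : Ideal D} (hJ : J ≠ ⊥) : (idealSub J : Submodule D K) ≠ ⊥ := by
  obtain ⟨a, ha, ha0⟩ := Submodule.ne_bot_iff J |>.mp hJ
  refine Submodule.ne_bot_iff _ |>.mpr ⟨algebraMap D K a, Submodule.mem_map_of_mem ha, ?_⟩
  simpa using (map_ne_zero_iff _ (IsFractionRing.injective D K)).mpr ha0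

lemma idealSub_le_one (J : Ideal D) : (idealSub J : Submodule D K) ≤ 1 := by
  rw [Submodule.one_eq_range]
  rintro _ ⟨a, _, rfl⟩
  exact LinearMap.mem_range_self _ a

lemma mem_cOp {J : Ideal D} {a : D} :
    a ∈ cOp s J ↔ algebraMap D K a ∈ starF s.toFun (idealSub J) := Iff.rfl

lemma le_cOp {J : Ideal D} (hJ : J ≠ ⊥) : J ≤ cOp s J := by
  intro a ha
  exact (mem_cOp s).mpr (le_starF s (idealSub_ne_bot hJ) (Submodule.mem_map_of_mem ha))

lemma cOp_ne_bot {J : Ideal D} (hJ : J ≠ ⊥) : cOp s J ≠ ⊥ :=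
  fun h => hJ (le_bot_iff.mp (h ▸ le_cOp s hJ))

lemma cOp_idem {J : Ideal D} (hJ : J ≠ ⊥) : cOp s (cOp s J) = cOp s J := by
  refine le_antisymm ?_ (le_cOp s (cOp_ne_bot s hJ))
  refine Submodule.comap_mono ?_
  have h1 : (idealSub (cOp s J) : Submodule D K) ≤ starF s.toFun (idealSub J) :=
    Submodule.map_comap_le _ _
  exact (starF_mono h1).trans (starF_idem_le s (idealSub_ne_bot hJ))

lemma cOp_eq_top_iff {J : Ideal D} :
    cOp s J = ⊤ ↔ (1 : K) ∈ starF s.toFun (idealSub J) := by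
  rw [Ideal.eq_top_iff_one]
  have : algebraMap D K 1 = (1 : K) := map_one _
  rw [mem_cOp, this]

lemma exists_quasiPrime {I : Ideal D} (hI0 : I ≠ ⊥) (hItop : cOp s I ≠ ⊤) :
    ∃ M : Ideal D, QuasiPrime (starF s.toFun) M ∧ I ≤ M := by
  classical
  set P : Set (Ideal D) := {J | I ≤ J ∧ J ≠ ⊤ ∧ cOp s J = J} with hP
  have hcI : cOp s I ∈ P := ⟨le_cOp s hI0, hItop, cOp_idem s hI0⟩
  have hchain : ∀ C ⊆ P, IsChain (· ≤ ·) C → ∀ y ∈ C, ∃ ub ∈ P, ∀ z ∈ C, z ≤ ub := by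
    intro C hCP hC y hy
    have hCne : C.Nonempty := ⟨y, hy⟩
    have hCdir : DirectedOn (· ≤ ·) C := hC.directedOn
    refine ⟨sSup C, ⟨?_, ?_, ?_⟩, fun z hz => le_sSup hz⟩
    · exact (hCP hy).1.trans (le_sSup hy)
    · intro htop
      have h1 : (1 : D) ∈ sSup C := htop ▸ Submodule.mem_top
      obtain ⟨z, hz, h1z⟩ := (Submodule.mem_sSup_of_directed hCne hCdir).mp h1
      exact (hCP hz).2.1 (Ideal.eq_top_iff_one z |>.mpr h1z)
    · have hsne : sSup C ≠ ⊥ := by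
        intro h
        exact hI0 (le_bot_iff.mp (h ▸ ((hCP hy).1.trans (le_sSup hy))))
      refine le_antisymm ?_ (le_cOp s hsne)
      intro a ha
      rw [mem_cOp, mem_starF_iff s (idealSub_ne_bot hsne)] at ha
      obtain ⟨F, hFfg, hF0, hFle, haF⟩ := ha
      -- idealSub (sSup C) ≤ sSup (idealSub '' C)
      have himg : (idealSub (sSup C) : Submodule D K) ≤ sSup (idealSub '' C) := by
        rintro _ ⟨d, hd, rfl⟩
        obtain ⟨z, hz, hdz⟩ := (Submodule.mem_sSup_of_directed hCne hCdir).mp hd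
        have hle : (idealSub z : Submodule D K) ≤ sSup (idealSub '' C) :=
          le_sSup (Set.mem_image_of_mem idealSub hz)
        exact hle (Submodule.mem_map_of_mem hdz)
      have hdir' : DirectedOn (· ≤ ·) ((idealSub : Ideal D → Submodule D K) '' C) := by
        rintro _ ⟨z₁, hz₁, rfl⟩ _ ⟨z₂, hz₂, rfl⟩
        obtain ⟨z₃, hz₃, h13, h23⟩ := hCdir z₁ hz₁ z₂ hz₂
        exact ⟨idealSub z₃, Set.mem_image_of_mem _ hz₃,
          Submodule.map_mono h13, Submodule.map_mono h23⟩
      have hcomp := (Submodule.fg_iff_compact F).mp hFfg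
      rw [CompleteLattice.isCompactElement_iff_le_of_directed_sSup_le] at hcomp
      obtain ⟨_, ⟨z, hz, rfl⟩, hFz⟩ := hcomp ((idealSub : Ideal D → Submodule D K) '' C)
        (hCne.image _) hdir' (hFle.trans himg)
      have : a ∈ cOp s z := (mem_cOp s).mpr (star_le_starF s hFfg hF0 hFz haF)
      rw [(hCP hz).2.2] at this
      exact (le_sSup hz : z ≤ sSup C) this
  obtain ⟨M, hIM, hMP, hMmax⟩ := zorn_le_nonempty₀ P hchain (cOp s I) hcI
  obtain ⟨hIM', hMtop, hMc⟩ := hMP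
  have hMbot : M ≠ ⊥ := by
    intro h
    exact hI0 (le_bot_iff.mp (h ▸ (le_cOp s hI0).trans hIM))
  have key : ∀ r ∉ M, (1 : K) ∈ starF s.toFun (idealSub (M ⊔ Ideal.span {r})) := by
    intro r hr
    set J : Ideal D := M ⊔ Ideal.span {r} with hJ
    have hJ0 : J ≠ ⊥ := fun h => hMbot (le_bot_iff.mp (h ▸ le_sup_left))
    by_cases hc : cOp s J = ⊤
    · exact (cOp_eq_top_iff s).mp hc
    · exfalso
      have hcJP : cOp s J ∈ P := ⟨hIM'.trans (le_sup_left.trans (le_cOp s hJ0)), hc,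
        cOp_idem s hJ0⟩
      have hMle : M ≤ cOp s J := le_sup_left.trans (le_cOp s hJ0)
      have := hMmax hcJP hMle
      exact hr (this (le_cOp s hJ0 (Ideal.mem_sup_right (Ideal.mem_span_singleton_self r))))
  have hprime : M.IsPrime := by
    rw [Ideal.isPrime_iff]
    refine ⟨hMtop, ?_⟩
    intro a b hab
    by_contra hcon
    push_neg at hcon
    obtain ⟨ha, hb⟩ := hcon
    have hJa0 : (idealSub (M ⊔ Ideal.span {a}) : Submodule D K) ≠ ⊥ :=
      idealSub_ne_bot (fun h => hMbot (le_bot_iff.mp (h ▸ le_sup_left)))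
    have hJb0 : (idealSub (M ⊔ Ideal.span {b}) : Submodule D K) ≠ ⊥ :=
      idealSub_ne_bot (fun h => hMbot (le_bot_iff.mp (h ▸ le_sup_left)))
    obtain ⟨Fa, hFafg, hFa0, hFale, h1a⟩ :=
      (mem_starF_iff s hJa0).mp (key a ha)
    obtain ⟨Fb, hFbfg, hFb0, hFble, h1b⟩ :=
      (mem_starF_iff s hJb0).mp (key b hb)
    have h1ab : (1 : K) ∈ s.toFun (Fa * Fb) := by
      have := Submodule.mul_mem_mul h1a h1b
      rw [mul_one] at this
      exact star_mul_le s hFa0 hFb0 this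
    have hFab0 : Fa * Fb ≠ ⊥ := by
      obtain ⟨p, hp, hp0⟩ := Submodule.ne_bot_iff Fa |>.mp hFa0
      obtain ⟨q, hq, hq0⟩ := Submodule.ne_bot_iff Fb |>.mp hFb0
      exact Submodule.ne_bot_iff _ |>.mpr ⟨p * q, Submodule.mul_mem_mul hp hq,
        mul_ne_zero hp0 hq0⟩
    -- (M ⊔ aD)(M ⊔ bD) ≤ M
    have hJJ : (M ⊔ Ideal.span {a}) * (M ⊔ Ideal.span {b}) ≤ M := by
      rw [Ideal.sup_mul, Ideal.mul_sup, Ideal.mul_sup,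
        Ideal.span_singleton_mul_span_singleton]
      refine sup_le (sup_le Ideal.mul_le_right Ideal.mul_le_left)
        (sup_le Ideal.mul_le_right ?_)
      rw [Ideal.span_le, Set.singleton_subset_iff]
      exact hab
    have hsubmul : (idealSub (M ⊔ Ideal.span {a}) : Submodule D K) *
        idealSub (M ⊔ Ideal.span {b}) ≤ idealSub M := by
      rw [Submodule.mul_le]
      rintro _ ⟨p, hp, rfl⟩ _ ⟨q, hq, rfl⟩
      have : p * q ∈ M := hJJ (Ideal.mul_mem_mul hp hq)
      exact ⟨p * q, this, by simp [map_mul]⟩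
    have hFable : Fa * Fb ≤ idealSub M :=
      (mul_le_mul' hFale hFble).trans hsubmul
    have h1M : (1 : D) ∈ cOp s M :=
      (mem_cOp s).mpr (by
        simpa using star_le_starF s (hFafg.mul hFbfg) hFab0 hFable h1ab)
    rw [hMc] at h1M
    exact hMtop (Ideal.eq_top_iff_one M |>.mpr h1M)
  exact ⟨M, ⟨⟨hMbot, hMc⟩, hprime⟩, (le_cOp s hI0).trans hIM⟩

variable {T : Subalgebra D K}

lemma mem_oneT {z : K} : z ∈ (1 : Submodule ↥T K) ↔ z ∈ T := by
  rw [Submodule.one_eq_range]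
  constructor
  · rintro ⟨t, rfl⟩
    simpa [Algebra.linearMap_apply, Subalgebra.algebraMap_eq] using t.2
  · intro hz
    exact ⟨⟨z, hz⟩, by simp [Algebra.linearMap_apply, Subalgebra.algebraMap_eq]⟩

lemma mul_mem_oneT {z : K} (hz : z ∈ (1 : Submodule ↥T K)) {t : K} (ht : t ∈ T) :
    t * z ∈ (1 : Submodule ↥T K) := by
  have := Submodule.smul_mem (1 : Submodule ↥T K) (⟨t, ht⟩ : ↥T) hz
  simpa [Algebra.smul_def, Subalgebra.algebraMap_eq] using this

lemma oneT_ne_bot : (1 : Submodule ↥T K) ≠ ⊥ := by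
  intro h
  have h1 : (1 : K) ∈ (1 : Submodule ↥T K) := mem_oneT.mpr (one_mem T)
  rw [h, Submodule.mem_bot] at h1
  exact one_ne_zero h1

end SemistarAux

end AuxLemmas

/-- **Lemma 3.11.** If `⋆'` is a (semi)star operation on `T` (i.e. `T^{⋆'} = T`) and `T` is
`(⋆,⋆')`-linked to `D`, then `T^{ℓ_{⋆,T}} = T`. -/
theorem ellOp_one_eq_one_of_linked
    {D K : Type*} [CommRing D] [IsDomain D] [Field K] [Algebra D K] [IsFractionRing D K]
    (s : SemistarOp D K) (T : Subalgebra D K) (s' : SemistarOp ↥T K)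
    (hstar : s'.toFun 1 = 1)
    (hlinked : LinkedF s.toFun T s'.toFun) :
    ellOp s.toFun T 1 = 1 := by
  classical
  open SemistarAux in
  refine le_antisymm ?_ ?_
  · -- hard direction
    intro x hx
    simp only [ellOp, Submodule.mem_iInf] at hx
    by_cases hx0 : x = 0
    · simp [hx0]
    set I : Ideal D :=
      { carrier := {d : D | algebraMap D K d * x ∈ (1 : Submodule ↥T K)}
        add_mem' := by
          intro p q hp hq
          simp only [Set.mem_setOf_eq, map_add, add_mul] at *
          exact Submodule.add_mem _ hp hq
        zero_mem' := by simp
        smul_mem' := by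
          intro c d hd
          simp only [Set.mem_setOf_eq, smul_eq_mul, map_mul, mul_assoc] at *
          exact mul_mem_oneT hd (T.algebraMap_mem c) } with hI
    have hI0 : I ≠ ⊥ := by
      obtain ⟨⟨n, dd⟩, hnd⟩ := IsLocalization.surj (nonZeroDivisors D) x
      refine Submodule.ne_bot_iff I |>.mpr ⟨dd.1, ?_, nonZeroDivisors.coe_ne_zero dd⟩
      show algebraMap D K dd.1 * x ∈ (1 : Submodule ↥T K)
      rw [mul_comm, hnd]
      exact mem_oneT.mpr (T.algebraMap_mem n)
    by_cases htop : cOp s I = ⊤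
    · -- linked case
      have h1 : (1 : K) ∈ starF s.toFun (idealSub I) := (cOp_eq_top_iff s).mp htop
      rw [mem_starF_iff s (idealSub_ne_bot hI0)] at h1
      obtain ⟨F, hFfg, hF0, hFle, h1F⟩ := h1
      have hinj : Function.Injective (Algebra.linearMap D K) := IsFractionRing.injective D K
      set F₀ : Ideal D := Submodule.comap (Algebra.linearMap D K) F with hF₀
      have hFrange : F ≤ LinearMap.range (Algebra.linearMap D K) :=
        hFle.trans (by rw [← Submodule.map_top]; exact Submodule.map_mono le_top)
      have hmap : idealSub F₀ = F := by
        rw [hF₀]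
        show Submodule.map (Algebra.linearMap D K) (Submodule.comap (Algebra.linearMap D K) F) = F
        rw [Submodule.map_comap_eq, inf_eq_right.mpr hFrange]
      have hF₀fg : F₀.FG :=
        Submodule.fg_of_fg_map_injective (Algebra.linearMap D K) hinj
          (by rw [show Submodule.map (Algebra.linearMap D K) F₀ = F from hmap]; exact hFfg)
      have hF₀0 : F₀ ≠ ⊥ := by
        intro h
        apply hF0
        rw [← hmap, h]
        exact Submodule.map_bot _
      have hF₀I : F₀ ≤ I := by
        intro d hd
        have : Algebra.linearMap D K d ∈ F := hd
        obtain ⟨d', hd', hdd⟩ := hFle this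
        rwa [← hinj hdd]
      have hone0 : (1 : Submodule D K) ≠ ⊥ := by
        intro h
        have : (1 : K) ∈ (1 : Submodule D K) := Submodule.one_le.mp le_rfl
        rw [h, Submodule.mem_bot] at this
        exact one_ne_zero this
      have hsF : s.toFun (idealSub F₀) = s.toFun 1 := by
        rw [hmap]
        have hsF0 : s.toFun F ≠ ⊥ := fun h => hF0 (le_bot_iff.mp (h ▸ s.le_star' F hF0))
        refine le_antisymm (s.mono' _ _ hF0 hone0 (hFle.trans (idealSub_le_one I))) ?_
        have h1le : (1 : Submodule D K) ≤ s.toFun F := by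
          rw [Submodule.one_eq_span, Submodule.span_le, Set.singleton_subset_iff]
          exact h1F
        have := s.mono' _ _ hone0 hsF0 h1le
        rwa [s.idem' F hF0] at this
      have hlink : s'.toFun (extT T (idealSub F₀)) = 1 := by
        rw [hlinked F₀ hF₀0 hF₀fg hsF, hstar]
      set G : Submodule ↥T K := extT T (idealSub F₀) with hG
      have hG0 : G ≠ ⊥ := by
        obtain ⟨d, hd, hd0⟩ := Submodule.ne_bot_iff F₀ |>.mp hF₀0
        have hdG : algebraMap D K d ∈ G := Submodule.subset_span (Submodule.mem_map_of_mem hd)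
        refine Submodule.ne_bot_iff G |>.mpr ⟨algebraMap D K d, hdG, ?_⟩
        simpa using (map_ne_zero_iff _ hinj).mpr hd0
      have hxG : x • G ≤ (1 : Submodule ↥T K) := by
        rw [hG, extT, Submodule.smul_span, Submodule.span_le]
        rintro _ ⟨z, hz, rfl⟩
        obtain ⟨d, hd, rfl⟩ := hz
        have hdI : d ∈ I := hF₀I hd
        have : algebraMap D K d * x ∈ (1 : Submodule ↥T K) := hdI
        simpa [smul_eq_mul, mul_comm] using this
      have hxG0 : x • G ≠ ⊥ := smul_ne_bot hx0 hG0
      have hle : s'.toFun (x • G) ≤ (1 : Submodule ↥T K) := by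
        have := s'.mono' _ _ hxG0 oneT_ne_bot hxG
        rwa [hstar] at this
      rw [s'.smul' x hx0 G hG0, hlink] at hle
      have hxmem : x ∈ x • (1 : Submodule ↥T K) := by
        have := Submodule.smul_mem_pointwise_smul (1 : K) x (1 : Submodule ↥T K)
          (mem_oneT.mpr (one_mem T))
        simpa using this
      exact hle hxmem
    · -- quasi-prime case: contradiction
      obtain ⟨M, hMqp, hIM⟩ := exists_quasiPrime s hI0 htop
      have hx' := hx M hMqp
      set W : Submodule ↥T K :=
        { carrier := {y : K | ∃ r : D, r ∉ M ∧ algebraMap D K r * y ∈ (1 : Submodule ↥T K)}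
          add_mem' := by
            rintro y₁ y₂ ⟨r₁, hr₁, hy₁⟩ ⟨r₂, hr₂, hy₂⟩
            refine ⟨r₁ * r₂, fun h => ((hMqp.2.mem_or_mem h).elim hr₁ hr₂), ?_⟩
            have e : algebraMap D K (r₁ * r₂) * (y₁ + y₂) =
                algebraMap D K r₂ * (algebraMap D K r₁ * y₁) +
                  algebraMap D K r₁ * (algebraMap D K r₂ * y₂) := by
              rw [map_mul]; ring
            rw [e]
            exact Submodule.add_mem _ (mul_mem_oneT hy₁ (T.algebraMap_mem r₂))
              (mul_mem_oneT hy₂ (T.algebraMap_mem r₁))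
          zero_mem' := ⟨1, (Ideal.ne_top_iff_one M).mp hMqp.2.ne_top, by simp⟩
          smul_mem' := by
            rintro t y ⟨r, hr, hy⟩
            refine ⟨r, hr, ?_⟩
            have e : algebraMap D K r * (t • y) = (t : K) * (algebraMap D K r * y) := by
              rw [Algebra.smul_def]
              rw [show algebraMap ↥T K t = (t : K) from rfl]
              ring
            rw [e]
            exact mul_mem_oneT hy t.2 } with hW
      have hxW : x ∈ W := by
        have hle : Submodule.span ↥T
            {y : K | ∃ r : D, r ∉ M ∧ algebraMap D K r * y ∈ (1 : Submodule ↥T K)} ≤ W :=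
          Submodule.span_le.mpr (fun y hy => hy)
        exact hle hx'
      obtain ⟨r, hrM, hrx⟩ := hxW
      have hrI : r ∈ I := hrx
      exact absurd (hIM hrI) hrM
  · -- easy direction
    simp only [ellOp]
    refine le_iInf fun P => le_iInf fun hP => ?_
    intro y hy
    refine Submodule.subset_span ⟨1, (Ideal.ne_top_iff_one P).mp hP.2.ne_top, by simpa using hy⟩
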